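/- Let n ≥ 1 and let σ be the permutation of {1,…,n+1} with σ(1) = n+1 and σ(k) = k−1 for 2 ≤ k ≤ n+1. Then for every parity function ε : {1,…,n+1} → ℤ/2, (−1)^{σᵒ} = (−1)^{(ε(1)+⋯+ε(n))·ε(n+1)} (the exponent computed as a product of integer representatives). -/
import Mathlib


open Finset

/-- `(-1)^{σᵒ}`: the signature of the induced permutation `σᵒ` of the odd indices
(with respect to the parity function `ε`), computed as `(-1)` to the number of
inversions of `σ` among positions carrying odd values. -/
def oddSign {n : ℕ} (σ : Equiv.Perm (Fin n)) (ε : Fin n → ZMod 2) : ℤ :=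
  (-1 : ℤ) ^ (Finset.univ.filter fun q : Fin n × Fin n =>
      q.1 < q.2 ∧ ε (σ q.1) = 1 ∧ ε (σ q.2) = 1 ∧ σ q.2 < σ q.1).card

lemma neg_one_pow_mod_two (c : ℕ) : (-1 : ℤ) ^ (c % 2) = (-1 : ℤ) ^ c := by
  conv_rhs => rw [← Nat.mod_add_div c 2, pow_add, pow_mul]
  norm_num

/-- Let `n ≥ 1` and let `σ` be the permutation of `{1,…,n+1}` with `σ(1) = n+1` and
`σ(k) = k−1` for `2 ≤ k ≤ n+1` (written `0`-based on `Fin (n+1)`: `σ(0) = n` and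
`σ(k) = k−1` for `k ≥ 1`).  Then for every parity function `ε`,
`(−1)^{σᵒ} = (−1)^{(ε(1)+⋯+ε(n))·ε(n+1)}`. -/
theorem oddSign_rotate_down (n : ℕ) (hn : 1 ≤ n) (σ : Equiv.Perm (Fin (n + 1)))
    (hσ : ∀ k : Fin (n + 1), (σ k : ℕ) = if (k : ℕ) = 0 then n else (k : ℕ) - 1)
    (ε : Fin (n + 1) → ZMod 2) :
    oddSign σ ε
      = (-1 : ℤ) ^ ((∑ i : Fin n, ε i.castSucc).val * (ε (Fin.last n)).val) := by
  have hσ0 : σ 0 = Fin.last n := by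
    apply Fin.ext
    simpa using hσ 0
  have hσs : ∀ k : Fin n, σ k.succ = k.castSucc := by
    intro k
    apply Fin.ext
    have := hσ k.succ
    simp [Fin.val_succ] at this
    simpa using this
  -- sum vs card
  have hsum : (∑ i : Fin n, ε i.castSucc)
      = ((Finset.univ.filter fun k : Fin n => ε k.castSucc = 1).card : ZMod 2) := by
    have h1 : ∀ x : ZMod 2, x = if x = 1 then 1 else 0 := by decide
    rw [Finset.sum_congr rfl fun i _ => h1 (ε i.castSucc)]
    simp [Finset.sum_boole]
  set T := Finset.univ.filter fun k : Fin n => ε k.castSucc = 1 with hT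
  set S := Finset.univ.filter fun q : Fin (n+1) × Fin (n+1) =>
      q.1 < q.2 ∧ ε (σ q.1) = 1 ∧ ε (σ q.2) = 1 ∧ σ q.2 < σ q.1 with hS
  by_cases hlast : ε (Fin.last n) = 1
  · -- S = image of T
    have hSi : S = T.image (fun k : Fin n => ((0 : Fin (n+1)), k.succ)) := by
      ext q
      simp only [hS, hT, Finset.mem_filter, Finset.mem_image, Finset.mem_univ, true_and]
      constructor
      · rintro ⟨h12, hε1, hε2, hlt⟩
        have h1z : q.1 = 0 := by
          by_contra h1z
          have h1v : (q.1 : ℕ) ≠ 0 := fun h => h1z (Fin.ext h)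
          have h2v : (q.2 : ℕ) ≠ 0 := by
            have := (Fin.lt_iff_val_lt_val.mp h12); omega
          have e1 := hσ q.1
          have e2 := hσ q.2
          rw [if_neg h1v] at e1
          rw [if_neg h2v] at e2
          have := Fin.lt_iff_val_lt_val.mp hlt
          have := Fin.lt_iff_val_lt_val.mp h12
          omega
        have h2v : (q.2 : ℕ) ≠ 0 := by
          have := Fin.lt_iff_val_lt_val.mp h12
          rw [h1z] at this
          simp at this
          omega
        have h2lt : (q.2 : ℕ) - 1 < n := by have := q.2.isLt; omega
        refine ⟨⟨(q.2 : ℕ) - 1, h2lt⟩, ?_, ?_⟩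
        · have hq2 : q.2 = Fin.succ ⟨(q.2 : ℕ) - 1, h2lt⟩ := by
            apply Fin.ext; simp [Fin.val_succ]; omega
          rw [hq2, hσs] at hε2
          exact hε2
        · refine Prod.ext h1z.symm ?_
          apply Fin.ext; simp [Fin.val_succ]; omega
      · rintro ⟨k, hk, rfl⟩
        refine ⟨Fin.succ_pos k, ?_, ?_, ?_⟩
        · rw [hσ0]; exact hlast
        · rw [hσs]; exact hk
        · rw [hσ0, hσs]; exact Fin.castSucc_lt_last k
    have hinj : Function.Injective (fun k : Fin n => ((0 : Fin (n+1)), k.succ)) := by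
      intro a b h
      exact Fin.succ_injective _ (congrArg Prod.snd h)
    have hcard : S.card = T.card := by
      rw [hSi, Finset.card_image_of_injective _ hinj]
    rw [oddSign]
    rw [show (Finset.univ.filter fun q : Fin (n+1) × Fin (n+1) =>
      q.1 < q.2 ∧ ε (σ q.1) = 1 ∧ ε (σ q.2) = 1 ∧ σ q.2 < σ q.1) = S from rfl]
    rw [hcard, hsum, hlast]
    rw [ZMod.val_one, mul_one, ZMod.val_natCast]
    exact (neg_one_pow_mod_two T.card).symm
  · -- S is empty
    have hS0 : S = ∅ := by
      ext q
      simp only [hS, Finset.mem_filter, Finset.mem_univ, true_and, Finset.notMem_empty,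
        iff_false]
      rintro ⟨h12, hε1, hε2, hlt⟩
      have h1z : q.1 = 0 := by
        by_contra h1z
        have h1v : (q.1 : ℕ) ≠ 0 := fun h => h1z (Fin.ext h)
        have h2v : (q.2 : ℕ) ≠ 0 := by
          have := (Fin.lt_iff_val_lt_val.mp h12); omega
        have e1 := hσ q.1
        have e2 := hσ q.2
        rw [if_neg h1v] at e1
        rw [if_neg h2v] at e2
        have := Fin.lt_iff_val_lt_val.mp hlt
        have := Fin.lt_iff_val_lt_val.mp h12
        omega
      rw [h1z, hσ0] at hε1
      exact hlast hε1
    have hε0 : ε (Fin.last n) = 0 := by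
      have : ∀ x : ZMod 2, x ≠ 1 → x = 0 := by decide
      exact this _ hlast
    rw [oddSign]
    rw [show (Finset.univ.filter fun q : Fin (n+1) × Fin (n+1) =>
      q.1 < q.2 ∧ ε (σ q.1) = 1 ∧ ε (σ q.2) = 1 ∧ σ q.2 < σ q.1) = S from rfl]
    rw [hS0, hε0]
    simp
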